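/- Fix Δ ∈ ℝ and 0 < δ < 1, and define in ℝ⁴ the points u = (1,0,0,Δ), v = (1,1,0,Δ), w = (0,1,0,Δ), p = (0,0,0,Δ+δ). Then every three of these four points are affinely independent, and each of the four triangles [u,v,w], [u,v,p], [u,w,p], [v,w,p] has circumradius at most √((1+δ²)/2), which is strictly less than 1. -/

import Mathlib

noncomputable def pt (a b c d : ℝ) : EuclideanSpace ℝ (Fin 4) := WithLp.toLp 2 ![a, b, c, d]

lemma aff_ind_of_det (p : Fin 3 → EuclideanSpace ℝ (Fin 4)) (i j : Fin 4)
    (h : (p 1 - p 0) i * (p 2 - p 0) j - (p 1 - p 0) j * (p 2 - p 0) i ≠ 0) :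
    AffineIndependent ℝ p := by
  rw [affineIndependent_iff_not_collinear]
  intro hc
  obtain ⟨v, hv⟩ := (collinear_iff_of_mem (Set.mem_range_self (0 : Fin 3))).mp hc
  obtain ⟨r₁, hr₁⟩ := hv (p 1) (Set.mem_range_self 1)
  obtain ⟨r₂, hr₂⟩ := hv (p 2) (Set.mem_range_self 2)
  apply h
  have e1 : p 1 - p 0 = r₁ • v := by rw [hr₁]; abel_nf; simp [vadd_eq_add]
  have e2 : p 2 - p 0 = r₂ • v := by rw [hr₂]; abel_nf; simp [vadd_eq_add]
  rw [e1, e2]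
  simp [PiLp.smul_apply]
  ring

lemma circumradius_eq (s : Affine.Simplex ℝ (EuclideanSpace ℝ (Fin 4)) 2)
    (a b r : ℝ) (q : EuclideanSpace ℝ (Fin 4))
    (hq : q = a • (s.points 1 - s.points 0) + b • (s.points 2 - s.points 0) + s.points 0)
    (hr : ∀ i, dist (s.points i) q = r) : s.circumradius = r := by
  refine (s.eq_circumradius_of_dist_eq ?_ hr).symm
  have h0 : s.points 0 ∈ affineSpan ℝ (Set.range s.points) :=
    mem_affineSpan ℝ (Set.mem_range_self 0)
  have h1 : s.points 1 ∈ affineSpan ℝ (Set.range s.points) :=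
    mem_affineSpan ℝ (Set.mem_range_self 1)
  have h2 : s.points 2 ∈ affineSpan ℝ (Set.range s.points) :=
    mem_affineSpan ℝ (Set.mem_range_self 2)
  have hd : a • (s.points 1 - s.points 0) + b • (s.points 2 - s.points 0)
      ∈ (affineSpan ℝ (Set.range s.points)).direction :=
    Submodule.add_mem _
      (Submodule.smul_mem _ _ (AffineSubspace.vsub_mem_direction h1 h0))
      (Submodule.smul_mem _ _ (AffineSubspace.vsub_mem_direction h2 h0))
  have := AffineSubspace.vadd_mem_of_mem_direction hd h0
  rwa [hq]

/-- Every three of the four points `u, v, w, p` are affinely independent, and each of the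
four triangles has circumradius at most `√((1+δ²)/2) < 1` (for `0 < δ < 1`). -/
theorem facets_circumradius_lt_one (Δ δ : ℝ) (hδ0 : 0 < δ) (hδ1 : δ < 1) :
    AffineIndependent ℝ ![pt 1 0 0 Δ, pt 1 1 0 Δ, pt 0 1 0 Δ] ∧
    AffineIndependent ℝ ![pt 1 0 0 Δ, pt 1 1 0 Δ, pt 0 0 0 (Δ + δ)] ∧
    AffineIndependent ℝ ![pt 1 0 0 Δ, pt 0 1 0 Δ, pt 0 0 0 (Δ + δ)] ∧
    AffineIndependent ℝ ![pt 1 1 0 Δ, pt 0 1 0 Δ, pt 0 0 0 (Δ + δ)] ∧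
    (∀ h : AffineIndependent ℝ ![pt 1 0 0 Δ, pt 1 1 0 Δ, pt 0 1 0 Δ],
      (⟨_, h⟩ : Affine.Simplex ℝ (EuclideanSpace ℝ (Fin 4)) 2).circumradius
        ≤ Real.sqrt ((1 + δ^2)/2)) ∧
    (∀ h : AffineIndependent ℝ ![pt 1 0 0 Δ, pt 1 1 0 Δ, pt 0 0 0 (Δ + δ)],
      (⟨_, h⟩ : Affine.Simplex ℝ (EuclideanSpace ℝ (Fin 4)) 2).circumradius
        ≤ Real.sqrt ((1 + δ^2)/2)) ∧
    (∀ h : AffineIndependent ℝ ![pt 1 0 0 Δ, pt 0 1 0 Δ, pt 0 0 0 (Δ + δ)],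
      (⟨_, h⟩ : Affine.Simplex ℝ (EuclideanSpace ℝ (Fin 4)) 2).circumradius
        ≤ Real.sqrt ((1 + δ^2)/2)) ∧
    (∀ h : AffineIndependent ℝ ![pt 1 1 0 Δ, pt 0 1 0 Δ, pt 0 0 0 (Δ + δ)],
      (⟨_, h⟩ : Affine.Simplex ℝ (EuclideanSpace ℝ (Fin 4)) 2).circumradius
        ≤ Real.sqrt ((1 + δ^2)/2)) ∧
    Real.sqrt ((1 + δ^2)/2) < 1 := by
  have hk : (0:ℝ) < 1 + 2*δ^2 := by positivity
  refine ⟨?_, ?_, ?_, ?_, ?_, ?_, ?_, ?_, ?_⟩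
  · exact aff_ind_of_det _ 0 1 (by norm_num [pt, Matrix.cons_val_two])
  · exact aff_ind_of_det _ 0 1 (by norm_num [pt, Matrix.cons_val_two])
  · exact aff_ind_of_det _ 0 1 (by norm_num [pt, Matrix.cons_val_two])
  · exact aff_ind_of_det _ 0 1 (by norm_num [pt, Matrix.cons_val_two])
  · intro h
    rw [circumradius_eq ⟨_, h⟩ 0 (1/2) (Real.sqrt (1/2)) (pt (1/2) (1/2) 0 Δ)
      (by ext i; fin_cases i <;> (simp [pt]; try ring))
      (by intro i; fin_cases i <;>
        (rw [show dist _ _ = _ from EuclideanSpace.dist_eq _ _, Fin.sum_univ_four];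
         congr 1; simp [pt, Real.dist_eq, sq_abs, abs_of_pos hδ0, abs_of_pos hk]; ring))]
    exact Real.sqrt_le_sqrt (by nlinarith)
  · intro h
    rw [circumradius_eq ⟨_, h⟩ (1/2) (1/2) (Real.sqrt ((2+δ^2)/4))
      (pt (1/2) (1/2) 0 (Δ + δ/2))
      (by ext i; fin_cases i <;> (simp [pt]; try ring))
      (by intro i; fin_cases i <;>
        (rw [show dist _ _ = _ from EuclideanSpace.dist_eq _ _, Fin.sum_univ_four];
         congr 1; simp [pt, Real.dist_eq, sq_abs, abs_of_pos hδ0, abs_of_pos hk]; ring))]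
    exact Real.sqrt_le_sqrt (by nlinarith)
  · intro h
    have h1 : (δ^2/(1+2*δ^2)) * (1+2*δ^2) = δ^2 := by field_simp
    have h2 : δ^2/(1+2*δ^2) ≤ 1 := by rw [div_le_one hk]; nlinarith
    have h3 : (0:ℝ) ≤ δ^2/(1+2*δ^2) := by positivity
    rw [circumradius_eq ⟨_, h⟩ ((1-δ^2/(1+2*δ^2))/2) (δ^2/(1+2*δ^2))
      (Real.sqrt ((1+(δ^2/(1+2*δ^2))^2)/2 + (δ^2/(1+2*δ^2))^2*δ^2))
      (pt ((1-δ^2/(1+2*δ^2))/2) ((1-δ^2/(1+2*δ^2))/2) 0 (Δ + (δ^2/(1+2*δ^2))*δ))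
      (by ext i; fin_cases i <;> (simp [pt]; try ring))
      (by intro i; fin_cases i <;>
        (rw [show dist _ _ = _ from EuclideanSpace.dist_eq _ _, Fin.sum_univ_four];
         congr 1; simp [pt, Real.dist_eq, sq_abs, abs_div, div_pow, abs_of_pos hδ0, abs_of_pos hk];
         field_simp; ring))]
    refine Real.sqrt_le_sqrt ?_
    nlinarith [h1, mul_nonneg (sub_nonneg.mpr h2) (mul_nonneg h3 hk.le)]
  · intro h
    rw [circumradius_eq ⟨_, h⟩ 0 (1/2) (Real.sqrt ((2+δ^2)/4))
      (pt (1/2) (1/2) 0 (Δ + δ/2))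
      (by ext i; fin_cases i <;> (simp [pt]; try ring))
      (by intro i; fin_cases i <;>
        (rw [show dist _ _ = _ from EuclideanSpace.dist_eq _ _, Fin.sum_univ_four];
         congr 1; simp [pt, Real.dist_eq, sq_abs, abs_of_pos hδ0, abs_of_pos hk]; ring))]
    exact Real.sqrt_le_sqrt (by nlinarith)
  · exact (Real.sqrt_lt' one_pos).2 (by nlinarith)
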